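/- Suppose A Z_k = U_{k+1} M_k and Aᵀ U_{k+1} = V_{k+1} T_{k+1}, where U_{k+1} and V_{k+1} have orthonormal columns, u_1 = b/β_1 with β_1 = ‖b‖_2, and T_{k+1} is upper triangular with (1,1) entry t_{11}. Then for any y ∈ ℝ^k, Aᵀ(A Z_k y − b) = V_{k+1}(T_{k+1} M_k y − β_1 t_{11} e_1), and ‖Aᵀ(A Z_k y − b)‖_2 = ‖T_{k+1} M_k y − β_1 t_{11} e_1‖_2. -/

import Mathlib

open Matrix BigOperators Finset

lemma norm_pres {n k : ℕ} (V : Matrix (Fin n) (Fin k) ℝ) (hV : Vᵀ * V = 1)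
    (x : Fin k → ℝ) : (∑ i, (V.mulVec x i) ^ 2) = ∑ i, (x i) ^ 2 := by
  have h1 : (∑ i, (V.mulVec x i) ^ 2) = V.mulVec x ⬝ᵥ V.mulVec x := by
    simp [dotProduct, sq]
  have h2 : (∑ i, (x i) ^ 2) = x ⬝ᵥ x := by simp [dotProduct, sq]
  rw [h1, h2, Matrix.dotProduct_mulVec, ← Matrix.mulVec_transpose,
    Matrix.mulVec_mulVec, hV, Matrix.one_mulVec]

/-- FLSMR identity: Aᵀ(A Z y − b) = V (T M y − β t₁₁ e₁), with equal norms. -/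
theorem stmt_4 (m n k : ℕ) (A : Matrix (Fin m) (Fin n) ℝ) (b : Fin m → ℝ)
    (Z : Matrix (Fin n) (Fin k) ℝ) (M : Matrix (Fin (k + 1)) (Fin k) ℝ)
    (T : Matrix (Fin (k + 1)) (Fin (k + 1)) ℝ)
    (U : Matrix (Fin m) (Fin (k + 1)) ℝ) (V : Matrix (Fin n) (Fin (k + 1)) ℝ)
    (β : ℝ) (hβ : β = Real.sqrt (∑ i, (b i) ^ 2)) (hβ0 : β ≠ 0)
    (hU : Uᵀ * U = 1) (hV : Vᵀ * V = 1)
    (hu1 : ∀ i, U i 0 = b i / β)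
    (hT : ∀ i j : Fin (k + 1), (j : ℕ) < (i : ℕ) → T i j = 0)
    (hAZ : A * Z = U * M) (hAU : Aᵀ * U = V * T) :
    ∀ y : Fin k → ℝ,
      Aᵀ.mulVec (A.mulVec (Z.mulVec y) - b)
        = V.mulVec ((T * M).mulVec y - (β * T 0 0) • (fun i => if i = 0 then (1:ℝ) else 0)) ∧
      Real.sqrt (∑ i, (Aᵀ.mulVec (A.mulVec (Z.mulVec y) - b) i) ^ 2)
        = Real.sqrt (∑ i, ((T * M).mulVec y i - β * T 0 0 * (if i = 0 then (1:ℝ) else 0)) ^ 2) := by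
  intro y
  set e1 : Fin (k+1) → ℝ := fun i => if i = 0 then (1:ℝ) else 0 with he1
  have hb : b = β • U.mulVec e1 := by
    funext i
    simp only [Pi.smul_apply, Matrix.mulVec, dotProduct, he1, mul_ite, mul_one, mul_zero,
      Finset.sum_ite_eq', Finset.mem_univ, if_true]
    rw [hu1 i, smul_eq_mul]; field_simp
  have hTe : T.mulVec e1 = T 0 0 • e1 := by
    funext i
    simp only [Pi.smul_apply, Matrix.mulVec, dotProduct, he1, mul_ite, mul_one, mul_zero,
      Finset.sum_ite_eq', Finset.mem_univ, if_true]
    by_cases h : i = 0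
    · subst h; simp
    · rw [hT i 0 (by simpa using Fin.pos_of_ne_zero h)]
      simp [h]
  have hmat : Aᵀ * (A * Z) = V * (T * M) := by
    rw [hAZ, ← Matrix.mul_assoc, hAU, Matrix.mul_assoc]
  have h3 : Aᵀ.mulVec (A.mulVec (Z.mulVec y)) = V.mulVec ((T * M).mulVec y) := by
    simp only [Matrix.mulVec_mulVec]
    rw [← Matrix.mul_assoc, Matrix.mul_assoc Aᵀ A Z, hmat]
  have h4 : Aᵀ.mulVec b = V.mulVec ((β * T 0 0) • e1) := by
    rw [hb, Matrix.mulVec_smul, Matrix.mulVec_mulVec, hAU, ← Matrix.mulVec_mulVec,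
      hTe, Matrix.mulVec_smul, smul_smul, ← Matrix.mulVec_smul]
  have key : Aᵀ.mulVec (A.mulVec (Z.mulVec y) - b)
      = V.mulVec ((T * M).mulVec y - (β * T 0 0) • e1) := by
    rw [Matrix.mulVec_sub, h3, h4, ← Matrix.mulVec_sub]
  refine ⟨key, ?_⟩
  rw [key]
  congr 1
  have := norm_pres V hV ((T * M).mulVec y - (β * T 0 0) • e1)
  rw [this]
  apply Finset.sum_congr rfl
  intro i _
  simp [he1, mul_assoc]
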